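/- Let a = (a(j))_{j∈ℤ} be finitely supported with a(j)=0 for |j|>k, and suppose the Laurent (Toeplitz) matrix A=(a(j−j'))_{j,j'∈ℤ} does not have ℓ^p-stability (1 ≤ p < ∞). Then for every integer N > k, the finite section matrix Ã_N = (a(j−j'))_{−N−k ≤ j ≤ N+k, −N ≤ j' ≤ N} satisfies inf_{0≠c∈ℝ^{2N+1}} ‖Ã_N c‖_p / ‖c‖_p ≤ (2(5+2^{1−p})^{1/p} k / N) · Σ_{|j|≤k} |a(j)|. -/

import Mathlib

open MeasureTheory ENNReal Filter

noncomputable def lpNorm (p : ℝ≥0∞) (c : ℤ → ℂ) : ℝ≥0∞ :=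
  eLpNorm c p Measure.count

noncomputable def rowSup (a : ℤ → ℤ → ℂ) (k : ℤ) : ℝ≥0∞ :=
  ⨆ j : ℤ, (‖a j (j - k)‖₊ : ℝ≥0∞)

noncomputable def normC (a : ℤ → ℤ → ℂ) : ℝ≥0∞ := ∑' k : ℤ, rowSup a k

noncomputable def matMul (a : ℤ → ℤ → ℂ) (c : ℤ → ℂ) : ℤ → ℂ :=
  fun j => ∑' j' : ℤ, a j j' * c j'

noncomputable def trunc (a : ℤ → ℤ → ℂ) (s : ℕ) : ℤ → ℤ → ℂ :=
  fun i j => if |i - j| < (s : ℤ) then a i j else 0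

noncomputable def chiProj (y : ℤ) (N : ℕ) (c : ℤ → ℂ) : ℤ → ℂ :=
  fun j => if |j - y| < (N : ℤ) then c j else 0

noncomputable def psi0 (x : ℝ) : ℝ := max (min (2 - 2 * |x|) 1) 0

noncomputable def Psi (n : ℤ) (N : ℕ) (c : ℤ → ℂ) : ℤ → ℂ :=
  fun j => (psi0 (((j - n : ℤ) : ℝ) / (N : ℝ)) : ℂ) * c j

section Aux

private lemma aesm (f : ℤ → ℂ) : AEStronglyMeasurable f (Measure.count : Measure ℤ) :=
  (measurable_of_countable f).aestronglyMeasurable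

private lemma lpNorm_eq {p : ℝ≥0∞} (hp0 : p ≠ 0) (hp' : p ≠ ⊤) (f : ℤ → ℂ) :
    lpNorm p f = (∑' j : ℤ, (‖f j‖₊ : ℝ≥0∞) ^ p.toReal) ^ (1 / p.toReal) := by
  rw [_root_.lpNorm, eLpNorm_eq_lintegral_rpow_enorm_toReal hp0 hp', lintegral_count]; rfl

private lemma lpNorm_shift {p : ℝ≥0∞} (hp0 : p ≠ 0) (hp' : p ≠ ⊤) (f : ℤ → ℂ) (l : ℤ) :
    lpNorm p (fun j => f (j - l)) = lpNorm p f := by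
  rw [lpNorm_eq hp0 hp', lpNorm_eq hp0 hp']
  congr 1
  exact Equiv.tsum_eq (Equiv.subRight l) (fun j => (‖f j‖₊ : ℝ≥0∞) ^ p.toReal)

private lemma lpNorm_smul {p : ℝ≥0∞} (r : ℂ) (f : ℤ → ℂ) :
    lpNorm p (fun j => r * f j) = (‖r‖₊ : ℝ≥0∞) * lpNorm p f :=
  eLpNorm_const_smul r f p Measure.count

private lemma lpNorm_lt_top {p : ℝ≥0∞} (hp0 : p ≠ 0) (hp' : p ≠ ⊤) {f : ℤ → ℂ}
    {s : Finset ℤ} (h : ∀ j ∉ s, f j = 0) : lpNorm p f < ⊤ := by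
  rw [lpNorm_eq hp0 hp']
  refine ENNReal.rpow_lt_top_of_nonneg (by positivity) ?_
  rw [tsum_eq_sum (s := s) (fun b hb => by
    rw [h b hb]; simp [ENNReal.zero_rpow_of_pos (ENNReal.toReal_pos hp0 hp')])]
  exact (ENNReal.sum_lt_top.mpr fun j _ =>
    ENNReal.rpow_lt_top_of_nonneg ENNReal.toReal_nonneg ENNReal.coe_ne_top).ne

private lemma matMul_eq {a : ℤ → ℂ} {k : ℕ} (ha : ∀ j : ℤ, (k : ℤ) < |j| → a j = 0)
    (c : ℤ → ℂ) (j : ℤ) :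
    matMul (fun j j' : ℤ => a (j - j')) c j
      = ∑ l ∈ Finset.Icc (-(k : ℤ)) (k : ℤ), a l * c (j - l) := by
  have h1 : matMul (fun j j' : ℤ => a (j - j')) c j = ∑' l : ℤ, a l * c (j - l) := by
    rw [matMul]
    rw [← Equiv.tsum_eq (Equiv.subLeft j) (fun j' => a (j - j') * c j')]
    simp [Equiv.subLeft]
  rw [h1]
  apply tsum_eq_sum
  intro b hb
  have hb' : (k : ℤ) < |b| := by
    rw [Finset.mem_Icc] at hb
    rw [lt_abs]
    omega
  rw [ha b hb', zero_mul]

end Aux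

section Aux2
open Polynomial

private lemma psi0_nonneg (x : ℝ) : 0 ≤ psi0 x := le_max_right _ _

private lemma psi0_of_le_half {x : ℝ} (h : |x| ≤ 1 / 2) : psi0 x = 1 := by
  have h0 : 0 ≤ |x| := abs_nonneg x
  rw [psi0, min_eq_right (by linarith), max_eq_left (by linarith)]

private lemma psi0_of_one_le {x : ℝ} (h : 1 ≤ |x|) : psi0 x = 0 := by
  rw [psi0, max_eq_right]
  exact min_le_of_left_le (by linarith)

private lemma psi0_lipschitz (x y : ℝ) : |psi0 x - psi0 y| ≤ 2 * |x - y| := by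
  have h4 : |(2 - 2 * |x|) - (2 - 2 * |y|)| ≤ 2 * |x - y| := by
    rw [show (2 - 2 * |x|) - (2 - 2 * |y|) = 2 * (|y| - |x|) by ring, abs_mul]
    have h5 := abs_abs_sub_abs_le_abs_sub y x
    rw [abs_sub_comm y x] at h5
    calc |(2 : ℝ)| * |(|y| - |x|)| = 2 * |(|y| - |x|)| := by rw [abs_two]
      _ ≤ 2 * |x - y| := by linarith
  calc |psi0 x - psi0 y|
      ≤ |min (2 - 2 * |x|) 1 - min (2 - 2 * |y|) 1| := abs_max_sub_max_le_abs _ _ _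
    _ ≤ max |(2 - 2 * |x|) - (2 - 2 * |y|)| |(1 : ℝ) - 1| := abs_min_sub_min_le_max _ _ _ _
    _ ≤ 2 * |x - y| := by
        apply max_le h4
        rw [sub_self, abs_zero]
        positivity

noncomputable def shiftL : Module.End ℂ (ℤ → ℂ) where
  toFun c := fun j => c (j - 1)
  map_add' _ _ := rfl
  map_smul' _ _ := rfl

private lemma shiftL_pow (n : ℕ) : ∀ (c : ℤ → ℂ) (j : ℤ), (shiftL ^ n) c j = c (j - n) := by
  induction n with
  | zero => intro c j; simp
  | succ n ih =>
    intro c j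
    rw [pow_succ, Module.End.mul_apply, ih (shiftL c) j]
    show c (j - n - 1) = c (j - (n + 1 : ℕ))
    congr 1
    push_cast
    ring

private lemma aeval_shiftL_apply {P : ℂ[X]} {M : ℕ} (hM : P.natDegree < M) (c : ℤ → ℂ) (j : ℤ) :
    (Polynomial.aeval shiftL P) c j = ∑ n ∈ Finset.range M, P.coeff n * c (j - n) := by
  rw [Polynomial.aeval_eq_sum_range' hM]
  rw [LinearMap.coe_sum, Finset.sum_apply, Finset.sum_apply]
  exact Finset.sum_congr rfl fun n _ => by
    rw [LinearMap.smul_apply, Pi.smul_apply, shiftL_pow, smul_eq_mul]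

private lemma factor_bound {p : ℝ≥0∞} (hp : 1 ≤ p) (hp' : p ≠ ⊤) {r : ℂ} (hr : ‖r‖ ≠ 1) :
    ∃ C : ℝ≥0∞, C ≠ 0 ∧ ∀ c : ℤ → ℂ, lpNorm p c < ⊤ →
      C * lpNorm p c ≤ lpNorm p ((shiftL - r • 1) c) ∧ lpNorm p ((shiftL - r • 1) c) < ⊤ := by
  have hp0 : p ≠ 0 := (lt_of_lt_of_le zero_lt_one hp).ne'
  have happ : ∀ c : ℤ → ℂ, (shiftL - r • 1) c = (fun j => c (j - 1)) - r • c := by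
    intro c; rfl
  have hshift : ∀ c : ℤ → ℂ, lpNorm p (fun j => c (j - 1)) = lpNorm p c :=
    fun c => lpNorm_shift hp0 hp' c 1
  have hsmul : ∀ c : ℤ → ℂ, lpNorm p (r • c) = (‖r‖₊ : ℝ≥0∞) * lpNorm p c := by
    intro c
    exact lpNorm_smul r c
  have hfin : ∀ c : ℤ → ℂ, lpNorm p c < ⊤ → lpNorm p ((shiftL - r • 1) c) < ⊤ := by
    intro c hc
    rw [happ]
    calc eLpNorm ((fun j => c (j - 1)) - r • c) p Measure.count
        ≤ lpNorm p (fun j => c (j - 1)) + lpNorm p (r • c) :=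
          eLpNorm_sub_le (aesm _) (aesm _) hp
      _ = lpNorm p c + (‖r‖₊ : ℝ≥0∞) * lpNorm p c := by rw [hshift, hsmul]
      _ < ⊤ := by
          refine ENNReal.add_lt_top.mpr ⟨hc, ?_⟩
          exact ENNReal.mul_lt_top ENNReal.coe_lt_top hc
  rcases lt_or_gt_of_ne hr with hlt | hgt
  · refine ⟨1 - (‖r‖₊ : ℝ≥0∞), ?_, fun c hc => ⟨?_, hfin c hc⟩⟩
    · have : (‖r‖₊ : ℝ≥0∞) < 1 := by
        rw [← ENNReal.coe_one, ENNReal.coe_lt_coe]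
        exact_mod_cast hlt
      simpa [tsub_eq_zero_iff_le] using this.not_ge
    · have key : lpNorm p c ≤ lpNorm p ((shiftL - r • 1) c) + (‖r‖₊ : ℝ≥0∞) * lpNorm p c := by
        have hdecomp : (fun j => c (j - 1)) = (shiftL - r • 1) c + r • c := by
          rw [happ]; ext j; simp
        calc lpNorm p c = lpNorm p (fun j => c (j - 1)) := (hshift c).symm
          _ = eLpNorm ((shiftL - r • 1) c + r • c) p Measure.count := by rw [hdecomp]; rfl
          _ ≤ lpNorm p ((shiftL - r • 1) c) + lpNorm p (r • c) :=
              eLpNorm_add_le (aesm _) (aesm _) hp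
          _ = _ := by rw [hsmul]
      calc (1 - (‖r‖₊ : ℝ≥0∞)) * lpNorm p c
          = 1 * lpNorm p c - (‖r‖₊ : ℝ≥0∞) * lpNorm p c :=
            ENNReal.sub_mul (fun _ _ => hc.ne)
        _ ≤ lpNorm p ((shiftL - r • 1) c) := by
            rw [one_mul]
            exact tsub_le_iff_right.mpr key
  · refine ⟨(‖r‖₊ : ℝ≥0∞) - 1, ?_, fun c hc => ⟨?_, hfin c hc⟩⟩
    · have : (1 : ℝ≥0∞) < (‖r‖₊ : ℝ≥0∞) := by
        rw [← ENNReal.coe_one, ENNReal.coe_lt_coe]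
        exact_mod_cast hgt
      simpa [tsub_eq_zero_iff_le] using this.not_ge
    · have key : (‖r‖₊ : ℝ≥0∞) * lpNorm p c
          ≤ lpNorm p ((shiftL - r • 1) c) + lpNorm p c := by
        have hdecomp : r • c = -((shiftL - r • 1) c) + (fun j => c (j - 1)) := by
          rw [happ]; ext j; simp
        calc (‖r‖₊ : ℝ≥0∞) * lpNorm p c = lpNorm p (r • c) := (hsmul c).symm
          _ = eLpNorm (-((shiftL - r • 1) c) + (fun j => c (j - 1))) p Measure.count := by
              rw [hdecomp]; rfl
          _ ≤ eLpNorm (-((shiftL - r • 1) c)) p Measure.count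
                + lpNorm p (fun j => c (j - 1)) := eLpNorm_add_le (aesm _) (aesm _) hp
          _ = lpNorm p ((shiftL - r • 1) c) + lpNorm p c := by
              rw [eLpNorm_neg, hshift]; rfl
      calc ((‖r‖₊ : ℝ≥0∞) - 1) * lpNorm p c
          = (‖r‖₊ : ℝ≥0∞) * lpNorm p c - 1 * lpNorm p c :=
            ENNReal.sub_mul (fun _ _ => hc.ne)
        _ ≤ lpNorm p ((shiftL - r • 1) c) := by
            rw [one_mul]
            exact tsub_le_iff_right.mpr key

private lemma prod_bound {p : ℝ≥0∞} (hp : 1 ≤ p) (hp' : p ≠ ⊤) (R : List ℂ)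
    (hR : ∀ r ∈ R, ‖r‖ ≠ 1) :
    ∃ C : ℝ≥0∞, C ≠ 0 ∧ ∀ c : ℤ → ℂ, lpNorm p c < ⊤ →
      C * lpNorm p c ≤ lpNorm p (((R.map (fun r => shiftL - r • 1)).prod) c) ∧
      lpNorm p (((R.map (fun r => shiftL - r • 1)).prod) c) < ⊤ := by
  induction R with
  | nil =>
    refine ⟨1, one_ne_zero, fun c hc => ?_⟩
    simp only [List.map_nil, List.prod_nil, Module.End.one_apply, one_mul]
    exact ⟨le_refl _, hc⟩
  | cons r R ih =>
    obtain ⟨C, hC, hCb⟩ := ih (fun x hx => hR x (List.mem_cons_of_mem _ hx))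
    obtain ⟨Cr, hCr, hCrb⟩ := factor_bound hp hp' (hR r (List.mem_cons_self))
    refine ⟨Cr * C, mul_ne_zero hCr hC, fun c hc => ?_⟩
    rw [List.map_cons, List.prod_cons, Module.End.mul_apply]
    obtain ⟨h1, h2⟩ := hCb c hc
    obtain ⟨h3, h4⟩ := hCrb _ h2
    refine ⟨?_, h4⟩
    calc Cr * C * lpNorm p c = Cr * (C * lpNorm p c) := mul_assoc _ _ _
      _ ≤ Cr * lpNorm p ((R.map (fun r => shiftL - r • 1)).prod c) := mul_le_mul_right h1 _
      _ ≤ _ := h3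

end Aux2

section Aux3
open Polynomial

private lemma stable_of_no_root {p : ℝ≥0∞} (hp : 1 ≤ p) (hp' : p ≠ ⊤) (a : ℤ → ℂ) (k : ℕ)
    (ha : ∀ j : ℤ, (k : ℤ) < |j| → a j = 0)
    (hroot : ¬∃ r : ℂ, ‖r‖ = 1 ∧ ∑ l ∈ Finset.Icc (-(k : ℤ)) (k : ℤ), a l * r ^ l = 0) :
    ∃ C₁ C₂ : ℝ≥0∞, C₁ ≠ 0 ∧ C₂ ≠ ⊤ ∧ ∀ c : ℤ → ℂ, lpNorm p c < ⊤ →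
      C₁ * lpNorm p c ≤ lpNorm p (matMul (fun j j' : ℤ => a (j - j')) c) ∧
        lpNorm p (matMul (fun j j' : ℤ => a (j - j')) c) ≤ C₂ * lpNorm p c := by
  have hp0 : p ≠ 0 := (lt_of_lt_of_le zero_lt_one hp).ne'
  set P : ℂ[X] := ∑ m ∈ Finset.range (2 * k + 1), Polynomial.monomial m (a ((m : ℤ) - k))
    with hPdef
  have hcoeff : ∀ n : ℕ, P.coeff n = a ((n : ℤ) - k) := by
    intro n
    rw [hPdef, Polynomial.finset_sum_coeff]
    simp only [Polynomial.coeff_monomial]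
    rw [Finset.sum_ite_eq']
    by_cases hn : n ∈ Finset.range (2 * k + 1)
    · rw [if_pos hn]
    · rw [if_neg hn]
      symm
      apply ha
      rw [Finset.mem_range, not_lt] at hn
      rw [abs_of_nonneg (by omega)]
      omega
  have hdeg : P.natDegree < 2 * k + 1 := by
    have h : P.natDegree ≤ 2 * k := Polynomial.natDegree_le_iff_coeff_eq_zero.mpr
      (fun m hm => by
        rw [hcoeff]
        apply ha
        rw [abs_of_nonneg (by omega)]
        omega)
    omega
  have hP0 : P ≠ 0 := by
    intro h0
    apply hroot
    refine ⟨1, by simp, ?_⟩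
    apply Finset.sum_eq_zero
    intro l hl
    rw [Finset.mem_Icc] at hl
    have h1 := hcoeff (l + k).toNat
    rw [h0, Polynomial.coeff_zero] at h1
    have h2 : (((l + k).toNat : ℕ) : ℤ) - k = l := by omega
    rw [h2] at h1
    rw [← h1, zero_mul]
  have hr_ne : ∀ r ∈ P.roots, ‖r‖ ≠ 1 := by
    intro r hrr hnorm
    apply hroot
    have hr0 : r ≠ 0 := fun h => by simp [h] at hnorm
    refine ⟨r, hnorm, ?_⟩
    have heval : P.eval r = 0 := Polynomial.isRoot_of_mem_roots hrr
    have heval2 : ∑ m ∈ Finset.range (2 * k + 1), a ((m : ℤ) - k) * r ^ m = 0 := by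
      rw [← heval, hPdef, Polynomial.eval_finset_sum]
      exact Finset.sum_congr rfl fun m _ => by rw [Polynomial.eval_monomial]
    have hre : ∑ l ∈ Finset.Icc (-(k : ℤ)) (k : ℤ), a l * r ^ l
        = r ^ (-(k : ℤ)) * ∑ m ∈ Finset.range (2 * k + 1), a ((m : ℤ) - k) * r ^ (m : ℕ) := by
      rw [Finset.mul_sum]
      refine Finset.sum_nbij' (i := fun l => (l + k).toNat) (j := fun m => (m : ℤ) - k)
        ?_ ?_ ?_ ?_ ?_
      · intro l hl; rw [Finset.mem_Icc] at hl; rw [Finset.mem_range]; omega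
      · intro m hm; rw [Finset.mem_range] at hm; rw [Finset.mem_Icc]; omega
      · intro l hl; rw [Finset.mem_Icc] at hl; omega
      · intro m hm; rw [Finset.mem_range] at hm; omega
      · intro l hl
        rw [Finset.mem_Icc] at hl
        have h2 : (((l + k).toNat : ℕ) : ℤ) = l + k := by omega
        rw [← zpow_natCast r ((l + k).toNat), h2,
          show (l + k - k : ℤ) = l from by ring]
        have h3 : r ^ (-(k : ℤ)) * r ^ (l + k) = r ^ l := by
          rw [← zpow_add₀ hr0]; congr 1; ring
        calc a l * r ^ l = a l * (r ^ (-(k : ℤ)) * r ^ (l + k)) := by rw [h3]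
          _ = r ^ (-(k : ℤ)) * (a l * r ^ (l + k)) := by ring
    rw [hre, heval2, mul_zero]
  have hsplits : P.Splits := IsAlgClosed.splits P
  have hfac := hsplits.eq_prod_roots
  set γ := P.leadingCoeff with hγdef
  have hγ : γ ≠ 0 := Polynomial.leadingCoeff_ne_zero.mpr hP0
  set L : List ℂ := P.roots.toList with hLdef
  have hLnorm : ∀ r ∈ L, ‖r‖ ≠ 1 := fun r hr =>
    hr_ne r (by rwa [hLdef, Multiset.mem_toList] at hr)
  obtain ⟨C, hC0, hCb⟩ := prod_bound hp hp' L hLnorm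
  have hop : Polynomial.aeval shiftL P
      = algebraMap ℂ (Module.End ℂ (ℤ → ℂ)) γ * ((L.map (fun r => shiftL - r • 1)).prod) := by
    conv_lhs => rw [hfac]
    rw [map_mul, Polynomial.aeval_C]
    congr 1
    have hlist : (Multiset.map (fun a => X - Polynomial.C a) P.roots).prod
        = (L.map (fun a => X - Polynomial.C a)).prod := by
      rw [hLdef]
      conv_lhs => rw [← Multiset.coe_toList P.roots]
      rw [Multiset.map_coe, Multiset.prod_coe]
    rw [hlist, map_list_prod, List.map_map]
    have hfun : ((Polynomial.aeval shiftL : ℂ[X] → Module.End ℂ (ℤ → ℂ))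
        ∘ fun a => X - Polynomial.C a) = fun r => shiftL - r • 1 := by
      funext r
      rw [Function.comp_apply, map_sub, Polynomial.aeval_X, Polynomial.aeval_C]
      refine congrArg (shiftL - ·) (LinearMap.ext fun c => ?_)
      rw [Module.algebraMap_end_apply]
      rfl
    rw [hfun]
  have hkey : ∀ c : ℤ → ℂ, matMul (fun j j' : ℤ => a (j - j')) c
      = fun j => (Polynomial.aeval shiftL P) c (j - (-(k : ℤ))) := by
    intro c; funext j
    rw [matMul_eq ha, aeval_shiftL_apply hdeg]
    refine Finset.sum_nbij' (i := fun l => (l + k).toNat) (j := fun m => (m : ℤ) - k)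
      ?_ ?_ ?_ ?_ ?_
    · intro l hl; rw [Finset.mem_Icc] at hl; rw [Finset.mem_range]; omega
    · intro m hm; rw [Finset.mem_range] at hm; rw [Finset.mem_Icc]; omega
    · intro l hl; rw [Finset.mem_Icc] at hl; omega
    · intro m hm; rw [Finset.mem_range] at hm; omega
    · intro l hl
      rw [Finset.mem_Icc] at hl
      have h2 : (((l + k).toNat : ℕ) : ℤ) = l + k := by omega
      rw [hcoeff, h2, show (l + k - k : ℤ) = l from by ring,
        show (j - -(k : ℤ) - (l + k)) = j - l from by ring]
  refine ⟨(‖γ‖₊ : ℝ≥0∞) * C, ∑ l ∈ Finset.Icc (-(k : ℤ)) (k : ℤ), (‖a l‖₊ : ℝ≥0∞),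
    mul_ne_zero (by simp [hγ]) hC0,
    (ENNReal.sum_lt_top.mpr fun _ _ => ENNReal.coe_lt_top).ne, fun c hc => ⟨?_, ?_⟩⟩
  · obtain ⟨h1, _⟩ := hCb c hc
    have e1 : lpNorm p (matMul (fun j j' : ℤ => a (j - j')) c)
        = lpNorm p ((Polynomial.aeval shiftL P) c) := by
      rw [hkey c]; exact lpNorm_shift hp0 hp' _ (-(k : ℤ))
    have e2 : (Polynomial.aeval shiftL P) c
        = fun j => γ * (((L.map (fun r => shiftL - r • 1)).prod) c j) := by
      rw [hop]; funext j
      rw [Module.End.mul_apply, Module.algebraMap_end_apply]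
      rfl
    rw [e1, e2, lpNorm_smul]
    calc (‖γ‖₊ : ℝ≥0∞) * C * lpNorm p c = (‖γ‖₊ : ℝ≥0∞) * (C * lpNorm p c) := mul_assoc _ _ _
      _ ≤ _ := mul_le_mul_right h1 _
  · have e3 : matMul (fun j j' : ℤ => a (j - j')) c
        = ∑ l ∈ Finset.Icc (-(k : ℤ)) (k : ℤ), (fun j => a l * c (j - l)) := by
      funext j
      rw [matMul_eq ha, Finset.sum_apply]
    rw [_root_.lpNorm, e3]
    calc eLpNorm (∑ l ∈ Finset.Icc (-(k : ℤ)) (k : ℤ), (fun j => a l * c (j - l))) p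
          Measure.count
        ≤ ∑ l ∈ Finset.Icc (-(k : ℤ)) (k : ℤ),
            eLpNorm (fun j => a l * c (j - l)) p Measure.count :=
          eLpNorm_sum_le (fun _ _ => aesm _) hp
      _ = ∑ l ∈ Finset.Icc (-(k : ℤ)) (k : ℤ), (‖a l‖₊ : ℝ≥0∞) * lpNorm p c :=
          Finset.sum_congr rfl fun l _ => by
            rw [show eLpNorm (fun j => a l * c (j - l)) p Measure.count
              = lpNorm p (fun j => a l * c (j - l)) from rfl, lpNorm_smul,
              lpNorm_shift hp0 hp']
      _ = (∑ l ∈ Finset.Icc (-(k : ℤ)) (k : ℤ), (‖a l‖₊ : ℝ≥0∞)) * lpNorm p c :=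
          (Finset.sum_mul _ _ _).symm

end Aux3

theorem stmt15 (p : ℝ≥0∞) (hp : 1 ≤ p) (hp' : p ≠ ⊤) (a : ℤ → ℂ) (k : ℕ)
    (ha : ∀ j : ℤ, (k : ℤ) < |j| → a j = 0)
    (hns : ¬ (∃ C₁ C₂ : ℝ≥0∞, C₁ ≠ 0 ∧ C₂ ≠ ⊤ ∧ ∀ c : ℤ → ℂ, lpNorm p c < ⊤ →
      C₁ * lpNorm p c ≤ lpNorm p (matMul (fun j j' : ℤ => a (j - j')) c) ∧
        lpNorm p (matMul (fun j j' : ℤ => a (j - j')) c) ≤ C₂ * lpNorm p c)) :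
    ∀ N : ℕ, k < N →
      (⨅ (c : ℤ → ℂ) (_ : c ≠ 0) (_ : ∀ j : ℤ, (N : ℤ) < |j| → c j = 0),
          lpNorm p (matMul (fun j j' : ℤ => a (j - j')) c) / lpNorm p c) ≤
        (2 * ((5 : ℝ≥0∞) + (2 : ℝ≥0∞) ^ (1 - p.toReal)) ^ (1 / p.toReal) * (k : ℝ≥0∞) / (N : ℝ≥0∞)) *
          ∑ j ∈ Finset.Icc (-(k : ℤ)) (k : ℤ), (‖a j‖₊ : ℝ≥0∞) := by
  intro N hkN
  have hp0 : p ≠ 0 := (lt_of_lt_of_le zero_lt_one hp).ne'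
  have ht1 : (1 : ℝ) ≤ p.toReal := by
    rw [← ENNReal.toReal_one]; exact ENNReal.toReal_mono hp' hp
  set t := p.toReal with htdef
  have ht0 : (0 : ℝ) < t := lt_of_lt_of_le zero_lt_one ht1
  have hinv0 : (0 : ℝ) ≤ 1 / t := one_div_nonneg.mpr ht0.le
  by_cases hroot : ∃ r : ℂ, ‖r‖ = 1 ∧ ∑ l ∈ Finset.Icc (-(k : ℤ)) (k : ℤ), a l * r ^ l = 0
  swap
  · exact absurd (stable_of_no_root hp hp' a k ha hroot) hns
  obtain ⟨r, hr1, hsum⟩ := hroot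
  have hr0 : r ≠ 0 := fun h => by simp [h] at hr1
  have hN0 : (0 : ℝ) < (N : ℝ) := by
    have : 0 < N := by omega
    exact_mod_cast this
  set c : ℤ → ℂ := fun j => ((psi0 ((j : ℝ) / (N : ℝ)) : ℝ) : ℂ) * r ^ (-j) with hcdef
  have hnormc : ∀ j : ℤ, ‖c j‖ = psi0 ((j : ℝ) / (N : ℝ)) := by
    intro j
    simp only [hcdef]
    rw [norm_mul, norm_zpow, hr1, one_zpow, mul_one, Complex.norm_real,
      Real.norm_eq_abs, abs_of_nonneg (psi0_nonneg _)]
  have hcsupp : ∀ j : ℤ, (N : ℤ) < |j| → c j = 0 := by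
    intro j hj
    simp only [hcdef]
    have habs : (1 : ℝ) ≤ |(j : ℝ) / (N : ℝ)| := by
      rw [abs_div, abs_of_nonneg hN0.le, le_div_iff₀ hN0, one_mul]
      calc (N : ℝ) ≤ ((|j| : ℤ) : ℝ) := by exact_mod_cast (by omega : (N : ℤ) ≤ |j|)
        _ = |(j : ℝ)| := by rw [Int.cast_abs]
    rw [psi0_of_one_le habs]
    simp
  have hc1 : c 0 = 1 := by
    simp only [hcdef]
    rw [show ((0 : ℤ) : ℝ) / (N : ℝ) = 0 by norm_num, psi0_of_le_half (by norm_num)]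
    norm_num
  have hc0 : c ≠ 0 := fun h => by rw [h] at hc1; simp at hc1
  have hAc : ∀ j : ℤ, matMul (fun j j' : ℤ => a (j - j')) c j
      = (∑ l ∈ Finset.Icc (-(k : ℤ)) (k : ℤ), a l * r ^ l *
          (((psi0 (((j - l : ℤ) : ℝ) / (N : ℝ)) : ℝ) : ℂ)
            - ((psi0 ((j : ℝ) / (N : ℝ)) : ℝ) : ℂ))) * r ^ (-j) := by
    intro j
    rw [matMul_eq ha]
    have step1 : ∀ l ∈ Finset.Icc (-(k : ℤ)) (k : ℤ), a l * c (j - l)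
        = a l * r ^ l * (((psi0 (((j - l : ℤ) : ℝ) / (N : ℝ)) : ℝ) : ℂ)
            - ((psi0 ((j : ℝ) / (N : ℝ)) : ℝ) : ℂ)) * r ^ (-j)
          + (a l * r ^ l) * (((psi0 ((j : ℝ) / (N : ℝ)) : ℝ) : ℂ) * r ^ (-j)) := by
      intro l _
      simp only [hcdef]
      have hz : r ^ (-(j - l)) = r ^ l * r ^ (-j) := by
        rw [← zpow_add₀ hr0]; congr 1; ring
      rw [hz]
      ring
    rw [Finset.sum_congr rfl step1, Finset.sum_add_distrib, ← Finset.sum_mul,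
      ← Finset.sum_mul, hsum, zero_mul, add_zero]
  set T : ℝ := ∑ l ∈ Finset.Icc (-(k : ℤ)) (k : ℤ), ‖a l‖ with hTdef
  have hT0 : 0 ≤ T := Finset.sum_nonneg fun _ _ => norm_nonneg _
  have hbd : ∀ j : ℤ, ‖matMul (fun j j' : ℤ => a (j - j')) c j‖ ≤ 2 * k / N * T := by
    intro j
    rw [hAc j, norm_mul, norm_zpow, hr1, one_zpow, mul_one]
    calc ‖∑ l ∈ Finset.Icc (-(k : ℤ)) (k : ℤ), a l * r ^ l *
          (((psi0 (((j - l : ℤ) : ℝ) / (N : ℝ)) : ℝ) : ℂ)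
            - ((psi0 ((j : ℝ) / (N : ℝ)) : ℝ) : ℂ))‖
        ≤ ∑ l ∈ Finset.Icc (-(k : ℤ)) (k : ℤ), ‖a l * r ^ l *
          (((psi0 (((j - l : ℤ) : ℝ) / (N : ℝ)) : ℝ) : ℂ)
            - ((psi0 ((j : ℝ) / (N : ℝ)) : ℝ) : ℂ))‖ := norm_sum_le _ _
      _ ≤ ∑ l ∈ Finset.Icc (-(k : ℤ)) (k : ℤ), ‖a l‖ * (2 * k / N) := by
          apply Finset.sum_le_sum
          intro l hl
          rw [Finset.mem_Icc] at hl
          rw [norm_mul, norm_mul, norm_zpow, hr1, one_zpow, mul_one]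
          apply mul_le_mul_of_nonneg_left ?_ (norm_nonneg _)
          rw [show (((psi0 (((j - l : ℤ) : ℝ) / (N : ℝ)) : ℝ) : ℂ)
              - ((psi0 ((j : ℝ) / (N : ℝ)) : ℝ) : ℂ))
              = (((psi0 (((j - l : ℤ) : ℝ) / (N : ℝ)) - psi0 ((j : ℝ) / (N : ℝ)) : ℝ)) : ℂ)
              from by push_cast; ring, Complex.norm_real, Real.norm_eq_abs]
          calc |psi0 (((j - l : ℤ) : ℝ) / (N : ℝ)) - psi0 ((j : ℝ) / (N : ℝ))|
              ≤ 2 * |((j - l : ℤ) : ℝ) / (N : ℝ) - (j : ℝ) / (N : ℝ)| := psi0_lipschitz _ _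
            _ = 2 * (|(l : ℝ)| / (N : ℝ)) := by
                congr 1
                rw [show ((j - l : ℤ) : ℝ) / (N : ℝ) - (j : ℝ) / (N : ℝ)
                  = -((l : ℝ) / (N : ℝ)) from by push_cast; ring, abs_neg, abs_div,
                  abs_of_nonneg hN0.le]
            _ ≤ 2 * ((k : ℝ) / (N : ℝ)) := by
                have hlk : |(l : ℝ)| ≤ (k : ℝ) := by
                  rw [← Int.cast_abs]; exact_mod_cast abs_le.mpr hl
                gcongr
            _ = 2 * k / N := by ring
      _ = 2 * k / N * T := by rw [hTdef, ← Finset.sum_mul]; ring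
  have hAcsupp : ∀ j : ℤ, ((N : ℤ) + k) < |j| → matMul (fun j j' : ℤ => a (j - j')) c j = 0 := by
    intro j hj
    rw [matMul_eq ha]
    apply Finset.sum_eq_zero
    intro l hl
    rw [Finset.mem_Icc] at hl
    have hjl : (N : ℤ) < |j - l| := by
      have h1 := abs_sub_abs_le_abs_sub j l
      have h2 : |l| ≤ (k : ℤ) := abs_le.mpr hl
      omega
    rw [hcsupp _ hjl, mul_zero]
  have hclower : ((N : ℝ≥0∞)) ^ (1 / t) ≤ lpNorm p c := by
    rw [lpNorm_eq hp0 hp', ← htdef]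
    apply ENNReal.rpow_le_rpow _ hinv0
    set m := N / 2 with hm
    have hsub : ∀ j ∈ Finset.Icc (-(m : ℤ)) (m : ℤ), (‖c j‖₊ : ℝ≥0∞) ^ t = 1 := by
      intro j hj
      rw [Finset.mem_Icc] at hj
      have h1 : ‖c j‖ = 1 := by
        rw [hnormc]
        apply psi0_of_le_half
        rw [abs_div, abs_of_nonneg hN0.le, div_le_iff₀ hN0]
        have hj2 : |(j : ℝ)| ≤ (m : ℝ) := by
          rw [← Int.cast_abs]
          exact_mod_cast abs_le.mpr hj
        have h2m : 2 * (m : ℝ) ≤ (N : ℝ) := by exact_mod_cast (by omega : 2 * m ≤ N)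
        linarith
      rw [← enorm_eq_nnnorm, ← ofReal_norm, h1, ENNReal.ofReal_one, ENNReal.one_rpow]
    have hstep1 : (N : ℝ≥0∞) ≤ ((Finset.Icc (-(m : ℤ)) (m : ℤ)).card : ℝ≥0∞) := by
      have hcard : ((m : ℤ) + 1 - -(m : ℤ)).toNat = 2 * m + 1 := by omega
      rw [Int.card_Icc, hcard]
      exact_mod_cast Nat.cast_le.mpr (by omega : N ≤ 2 * m + 1)
    calc (N : ℝ≥0∞) ≤ ((Finset.Icc (-(m : ℤ)) (m : ℤ)).card : ℝ≥0∞) := hstep1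
      _ = ∑ j ∈ Finset.Icc (-(m : ℤ)) (m : ℤ), (‖c j‖₊ : ℝ≥0∞) ^ t := by
        rw [Finset.sum_congr rfl hsub, Finset.sum_const, nsmul_eq_mul, mul_one]
      _ ≤ ∑' j : ℤ, (‖c j‖₊ : ℝ≥0∞) ^ t := ENNReal.sum_le_tsum _
  have hNpos : (0 : ℝ≥0∞) < (N : ℝ≥0∞) := by
    have : 0 < N := by omega
    exact_mod_cast this
  have hpow_pos : (0 : ℝ≥0∞) < (N : ℝ≥0∞) ^ (1 / t) :=
    ENNReal.rpow_pos hNpos (ENNReal.natCast_ne_top N)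
  have hcne0 : lpNorm p c ≠ 0 := (lt_of_lt_of_le hpow_pos hclower).ne'
  have hcnetop : lpNorm p c ≠ ⊤ :=
    (lpNorm_lt_top hp0 hp' (s := Finset.Icc (-(N : ℤ)) (N : ℤ)) (fun j hj => hcsupp j (by
      rw [Finset.mem_Icc] at hj; rw [lt_abs]; omega))).ne
  set TT := ∑ l ∈ Finset.Icc (-(k : ℤ)) (k : ℤ), (‖a l‖₊ : ℝ≥0∞) with hTTdef
  have hTT : ENNReal.ofReal T = TT := by
    rw [hTdef, ENNReal.ofReal_sum_of_nonneg (fun _ _ => norm_nonneg _)]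
    exact Finset.sum_congr rfl fun l _ => (ofReal_norm _).trans (enorm_eq_nnnorm _)
  have hco : ENNReal.ofReal (2 * (k : ℝ) / (N : ℝ)) = 2 * (k : ℝ≥0∞) / (N : ℝ≥0∞) := by
    rw [ENNReal.ofReal_div_of_pos hN0]
    congr 1
    · rw [show 2 * (k : ℝ) = ((2 * k : ℕ) : ℝ) from by push_cast; ring,
        ENNReal.ofReal_natCast]
      push_cast; ring
    · exact ENNReal.ofReal_natCast N
  set D : ℝ≥0∞ := 2 * (k : ℝ≥0∞) / (N : ℝ≥0∞) * TT with hDdef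
  have hDbd : ∀ j : ℤ, (‖matMul (fun j j' : ℤ => a (j - j')) c j‖₊ : ℝ≥0∞) ≤ D := by
    intro j
    rw [← enorm_eq_nnnorm, ← ofReal_norm]
    calc ENNReal.ofReal ‖matMul (fun j j' : ℤ => a (j - j')) c j‖
        ≤ ENNReal.ofReal (2 * k / N * T) := ENNReal.ofReal_le_ofReal (hbd j)
      _ = D := by
          rw [ENNReal.ofReal_mul (by positivity), hco, hTT, hDdef]
  have hAclp : lpNorm p (matMul (fun j j' : ℤ => a (j - j')) c)
      ≤ (((2 * (N + k) + 1 : ℕ) : ℝ≥0∞)) ^ (1 / t) * D := by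
    rw [lpNorm_eq hp0 hp', ← htdef]
    have hsum_le : ∑' j : ℤ, (‖matMul (fun j j' : ℤ => a (j - j')) c j‖₊ : ℝ≥0∞) ^ t
        ≤ ((2 * (N + k) + 1 : ℕ) : ℝ≥0∞) * D ^ t := by
      rw [tsum_eq_sum (s := Finset.Icc (-((N : ℤ) + k)) ((N : ℤ) + k)) (fun b hb => by
        rw [hAcsupp b (by rw [Finset.mem_Icc] at hb; rw [lt_abs]; omega)]
        simp [ENNReal.zero_rpow_of_pos ht0])]
      calc ∑ j ∈ Finset.Icc (-((N : ℤ) + k)) ((N : ℤ) + k),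
            (‖matMul (fun j j' : ℤ => a (j - j')) c j‖₊ : ℝ≥0∞) ^ t
          ≤ ∑ _j ∈ Finset.Icc (-((N : ℤ) + k)) ((N : ℤ) + k), D ^ t :=
            Finset.sum_le_sum fun j _ => ENNReal.rpow_le_rpow (hDbd j) ht0.le
        _ = ((Finset.Icc (-((N : ℤ) + k)) ((N : ℤ) + k)).card : ℝ≥0∞) * D ^ t := by
            rw [Finset.sum_const, nsmul_eq_mul]
        _ = ((2 * (N + k) + 1 : ℕ) : ℝ≥0∞) * D ^ t := by
            have hcard2 : (((N : ℤ) + k) + 1 - -((N : ℤ) + k)).toNat = 2 * (N + k) + 1 := by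
              omega
            rw [Int.card_Icc, hcard2]
    calc (∑' j : ℤ, (‖matMul (fun j j' : ℤ => a (j - j')) c j‖₊ : ℝ≥0∞) ^ t) ^ (1 / t)
        ≤ (((2 * (N + k) + 1 : ℕ) : ℝ≥0∞) * D ^ t) ^ (1 / t) :=
          ENNReal.rpow_le_rpow hsum_le hinv0
      _ = (((2 * (N + k) + 1 : ℕ) : ℝ≥0∞)) ^ (1 / t) * D := by
          rw [ENNReal.mul_rpow_of_nonneg _ _ hinv0, ← ENNReal.rpow_mul,
            mul_one_div, div_self ht0.ne', ENNReal.rpow_one]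
  refine le_trans (iInf_le_of_le c (iInf_le_of_le hc0 (iInf_le_of_le hcsupp (le_refl _)))) ?_
  rw [ENNReal.div_le_iff hcne0 hcnetop]
  have hS : (((2 * (N + k) + 1 : ℕ) : ℝ≥0∞)) ≤ ((5 : ℝ≥0∞) + (2 : ℝ≥0∞) ^ (1 - t)) * (N : ℝ≥0∞) := by
    calc (((2 * (N + k) + 1 : ℕ) : ℝ≥0∞)) ≤ ((5 * N : ℕ) : ℝ≥0∞) :=
        Nat.cast_le.mpr (by omega)
      _ = 5 * (N : ℝ≥0∞) := by push_cast; ring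
      _ ≤ ((5 : ℝ≥0∞) + (2 : ℝ≥0∞) ^ (1 - t)) * (N : ℝ≥0∞) := mul_le_mul_left le_self_add _
  calc lpNorm p (matMul (fun j j' : ℤ => a (j - j')) c)
      ≤ (((2 * (N + k) + 1 : ℕ) : ℝ≥0∞)) ^ (1 / t) * D := hAclp
    _ ≤ (((5 : ℝ≥0∞) + (2 : ℝ≥0∞) ^ (1 - t)) * (N : ℝ≥0∞)) ^ (1 / t) * D :=
        mul_le_mul_left (ENNReal.rpow_le_rpow hS hinv0) _
    _ = ((5 : ℝ≥0∞) + (2 : ℝ≥0∞) ^ (1 - t)) ^ (1 / t) * ((N : ℝ≥0∞)) ^ (1 / t) * D := by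
        rw [ENNReal.mul_rpow_of_nonneg _ _ hinv0]
    _ = (2 * ((5 : ℝ≥0∞) + (2 : ℝ≥0∞) ^ (1 - t)) ^ (1 / t) * (k : ℝ≥0∞) / (N : ℝ≥0∞) * TT)
          * ((N : ℝ≥0∞)) ^ (1 / t) := by
        rw [hDdef]
        simp only [div_eq_mul_inv]
        ring
    _ ≤ (2 * ((5 : ℝ≥0∞) + (2 : ℝ≥0∞) ^ (1 - t)) ^ (1 / t) * (k : ℝ≥0∞) / (N : ℝ≥0∞) * TT)
          * lpNorm p c := mul_le_mul_right hclower _
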